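/- Let m = n, let A be an n-by-n real unitary (orthogonal) matrix with columns a_1,...,a_n (so AᵀA = I), let W be a symmetric m-by-m real matrix with zero diagonal, b ∈ ℝ^m, σ_e > 0, σ_{x,i} > 0 for i = 1,...,m, and y ∈ ℝ^n. For S ∈ {-1,1}^m let s = {i : S_i = 1} with cardinality k, let A_s be the n-by-k submatrix of A with the columns indexed by s, let Σ_s be the k-by-k diagonal matrix with diagonal entries σ_{x,i}² for i ∈ s, and let Q_s = A_sᵀA_s + σ_e²Σ_s⁻¹. Let v ∈ ℝ^m have entries v_i = ln(σ_{x,i}²/σ_e²), and define q ∈ ℝ^m by q_i = b_i + (1/4)[ (σ_{x,i}²/(σ_e²(σ_e² + σ_{x,i}²)))·(yᵀa_i)² − ln(1 + σ_{x,i}²/σ_e²) ]. Then there exists a constant C ∈ ℝ, independent of S, such that for every S ∈ {-1,1}^m: (1/(2σ_e²))·yᵀA_sQ_s⁻¹A_sᵀy − (1/2)·ln(det Q_s) + (1/2)·SᵀWS + (b − v/4)ᵀS = C + qᵀS + (1/2)·SᵀWS. Consequently, the posterior distribution of the support under the Boltzmann-machine generative model is itself a Boltzmann machine with the same interaction matrix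 W and the modified bias vector q. -/

import Mathlib

open Matrix BigOperators

/-- Theorem 1 of the paper: for a unitary dictionary A, the
Boltzmann machine is a conjugate prior for MAP support estimation: there is a
constant C (independent of S) such that for every S ∈ {−1,1}^m (with support
s = {i : S_i = 1}, A_s the corresponding column submatrix, Σ_s the diagonal
matrix of variances on s, and Q_s = A_sᵀA_s + σ_e²Σ_s⁻¹),
(1/(2σ_e²))·yᵀA_sQ_s⁻¹A_sᵀy − (1/2)·ln(det Q_s) + (1/2)·SᵀWS + (b − v/4)ᵀS
  = C + qᵀS + (1/2)·SᵀWS,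
i.e. the posterior of the support is a Boltzmann machine with the same
interaction matrix W and the modified bias vector q. -/
theorem boltzmann_conjugate_prior_unitary (n : ℕ) (hn : 1 ≤ n)
    (A : Matrix (Fin n) (Fin n) ℝ) (hA : Aᵀ * A = 1)
    (W : Matrix (Fin n) (Fin n) ℝ) (hW : W.IsSymm) (hWd : ∀ i, W i i = 0)
    (b : Fin n → ℝ) (σe : ℝ) (hσe : 0 < σe)
    (σx : Fin n → ℝ) (hσx : ∀ i, 0 < σx i)
    (y : Fin n → ℝ)
    (v : Fin n → ℝ) (hv : ∀ i, v i = Real.log ((σx i) ^ 2 / σe ^ 2))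
    (q : Fin n → ℝ)
    (hq : ∀ i, q i = b i + (1 / 4) *
      ((σx i) ^ 2 / (σe ^ 2 * (σe ^ 2 + (σx i) ^ 2)) * (y ⬝ᵥ (fun r => A r i)) ^ 2 -
        Real.log (1 + (σx i) ^ 2 / σe ^ 2))) :
    ∃ C : ℝ, ∀ S : Fin n → ℝ, (∀ i, S i = 1 ∨ S i = -1) →
      let s : Finset (Fin n) := Finset.univ.filter (fun i => S i = 1)
      let As : Matrix (Fin n) {i // i ∈ s} ℝ := A.submatrix id (fun i => i.1)
      let Qs : Matrix {i // i ∈ s} {i // i ∈ s} ℝ :=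
        Asᵀ * As + σe ^ 2 • (Matrix.diagonal (fun i : {i // i ∈ s} => (σx i.1) ^ 2))⁻¹
      (1 / (2 * σe ^ 2)) * (y ⬝ᵥ ((As * Qs⁻¹ * Asᵀ) *ᵥ y)) -
          (1 / 2) * Real.log Qs.det +
          (1 / 2) * (S ⬝ᵥ (W *ᵥ S)) + (b - (1 / 4 : ℝ) • v) ⬝ᵥ S
        = C + q ⬝ᵥ S + (1 / 2) * (S ⬝ᵥ (W *ᵥ S)) := by
  -- notation
  set d : Fin n → ℝ := fun i => 1 + σe ^ 2 / (σx i) ^ 2 with hd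
  have hd0 : ∀ i, 0 < d i := fun i => by
    have := hσx i; have := hσe; positivity
  set c : Fin n → ℝ := fun i =>
    (1 / (2 * σe ^ 2)) * ((d i)⁻¹ * (y ⬝ᵥ fun r => A r i) ^ 2)
      - (1 / 2) * Real.log (d i) with hc
  refine ⟨(∑ i, c i) / 2, ?_⟩
  intro S hS
  simp only []
  set s : Finset (Fin n) := Finset.univ.filter (fun i => S i = 1) with hs
  set As : Matrix (Fin n) {i // i ∈ s} ℝ := A.submatrix id (fun i => i.1) with hAsdef
  -- columns of As are orthonormal
  have hAs : Asᵀ * As = 1 := by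
    ext i j
    have h := congrFun (congrFun hA i.1) j.1
    simp only [Matrix.mul_apply, Matrix.one_apply, Matrix.transpose_apply] at h ⊢
    simp only [hAsdef, Matrix.submatrix_apply, id]
    rw [h]
    by_cases hij : i = j
    · simp [hij]
    · rw [if_neg (fun h => hij (Subtype.ext h)), if_neg hij]
  set Qs : Matrix {i // i ∈ s} {i // i ∈ s} ℝ :=
    Asᵀ * As + σe ^ 2 • (Matrix.diagonal (fun i : {i // i ∈ s} => (σx i.1) ^ 2))⁻¹ with hQsdef
  have hdiaginv : (Matrix.diagonal (fun i : {i // i ∈ s} => (σx i.1) ^ 2))⁻¹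
      = Matrix.diagonal (fun i : {i // i ∈ s} => ((σx i.1) ^ 2)⁻¹) := by
    apply Matrix.inv_eq_right_inv
    rw [Matrix.diagonal_mul_diagonal,
      show (fun i : {i // i ∈ s} => (σx i.1) ^ 2 * ((σx i.1) ^ 2)⁻¹) = fun _ => (1 : ℝ) from
        funext fun i => mul_inv_cancel₀ (pow_ne_zero 2 (hσx i.1).ne')]
    exact Matrix.diagonal_one
  have hQ : Qs = Matrix.diagonal (fun i : {i // i ∈ s} => d i.1) := by
    rw [hQsdef, hAs, hdiaginv]
    ext i j
    rcases eq_or_ne i j with rfl | hij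
    · simp [Matrix.diagonal_apply_eq, Matrix.one_apply_eq, hd, div_eq_mul_inv]
    · simp [Matrix.diagonal_apply_ne _ hij, Matrix.one_apply_ne hij]
  have hQinv : Qs⁻¹ = Matrix.diagonal (fun i : {i // i ∈ s} => (d i.1)⁻¹) := by
    rw [hQ]
    apply Matrix.inv_eq_right_inv
    rw [Matrix.diagonal_mul_diagonal,
      show (fun i : {i // i ∈ s} => d i.1 * (d i.1)⁻¹) = fun _ => (1 : ℝ) from
        funext fun i => mul_inv_cancel₀ (hd0 i.1).ne']
    exact Matrix.diagonal_one
  -- determinant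
  have hdet : Real.log Qs.det = ∑ i ∈ s, Real.log (d i) := by
    rw [hQ, Matrix.det_diagonal, Real.log_prod (fun i _ => (hd0 i.1).ne'),
      ← Finset.sum_coe_sort s (fun i => Real.log (d i))]
  -- quadratic form
  have hu : ∀ i : {i // i ∈ s}, (Asᵀ *ᵥ y) i = y ⬝ᵥ (fun r => A r i.1) := by
    intro i
    simp [Matrix.mulVec, dotProduct, hAsdef, mul_comm]
  have hquad : y ⬝ᵥ ((As * Qs⁻¹ * Asᵀ) *ᵥ y)
      = ∑ i ∈ s, (d i)⁻¹ * (y ⬝ᵥ fun r => A r i) ^ 2 := by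
    rw [hQinv, ← Matrix.mulVec_mulVec, ← Matrix.mulVec_mulVec,
      Matrix.dotProduct_mulVec, ← Matrix.mulVec_transpose]
    rw [← Finset.sum_coe_sort s (fun i => (d i)⁻¹ * (y ⬝ᵥ fun r => A r i) ^ 2)]
    simp only [dotProduct, Matrix.mulVec_diagonal, hu]
    refine Finset.sum_congr rfl fun i _ => ?_
    ring
  rw [hdet, hquad]
  -- expand the remaining dot products and sums
  have hbv : (b - (1 / 4 : ℝ) • v) ⬝ᵥ S = ∑ i, (b i - (1 / 4) * v i) * S i := by
    simp [dotProduct]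
  have hqS : q ⬝ᵥ S = ∑ i, q i * S i := rfl
  rw [hbv, hqS, Finset.sum_filter, Finset.sum_filter]
  have main : ∀ i, (1 / (2 * σe ^ 2)) * (if S i = 1 then (d i)⁻¹ * (y ⬝ᵥ fun r => A r i) ^ 2 else 0)
      - (1 / 2) * (if S i = 1 then Real.log (d i) else 0)
      + (b i - (1 / 4) * v i) * S i = c i / 2 + q i * S i := by
    intro i
    have hx := hσx i
    have hxne : (σx i) ^ 2 ≠ 0 := by positivity
    have hene : σe ^ 2 ≠ 0 := by positivity
    have hsum : σe ^ 2 + (σx i) ^ 2 ≠ 0 := by positivity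
    have hdeq : d i = ((σx i) ^ 2 + σe ^ 2) / (σx i) ^ 2 := by
      simp only [hd]
      field_simp
    have hdinv : (d i)⁻¹ = (σx i) ^ 2 / ((σx i) ^ 2 + σe ^ 2) := by
      rw [hdeq, inv_div]
    have hlog : Real.log (1 + (σx i) ^ 2 / σe ^ 2)
        = Real.log (d i) + Real.log ((σx i) ^ 2 / σe ^ 2) := by
      rw [← Real.log_mul (hd0 i).ne' (by positivity)]
      congr 1
      rw [hdeq]
      field_simp
      ring
    rcases hS i with h1 | h1
    · rw [if_pos h1, if_pos h1, h1]
      simp only [hc]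
      rw [hq i, hv i, hlog, hdinv]
      field_simp
      ring
    · rw [if_neg (by rw [h1]; norm_num), if_neg (by rw [h1]; norm_num), h1]
      simp only [hc]
      rw [hq i, hv i, hlog, hdinv]
      field_simp
      ring
  have lhs_eq : (1 / (2 * σe ^ 2)) * (∑ i, if S i = 1 then (d i)⁻¹ * (y ⬝ᵥ fun r => A r i) ^ 2 else 0)
      - (1 / 2) * (∑ i, if S i = 1 then Real.log (d i) else 0)
      + ∑ i, (b i - (1 / 4) * v i) * S i
      = ∑ i, ((1 / (2 * σe ^ 2)) * (if S i = 1 then (d i)⁻¹ * (y ⬝ᵥ fun r => A r i) ^ 2 else 0)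
          - (1 / 2) * (if S i = 1 then Real.log (d i) else 0)
          + (b i - (1 / 4) * v i) * S i) := by
    rw [Finset.mul_sum, Finset.mul_sum, ← Finset.sum_sub_distrib, ← Finset.sum_add_distrib]
  have rhs_eq : (∑ i, c i) / 2 + ∑ i, q i * S i = ∑ i, (c i / 2 + q i * S i) := by
    rw [Finset.sum_div, ← Finset.sum_add_distrib]
  have key : (1 / (2 * σe ^ 2)) * (∑ i, if S i = 1 then (d i)⁻¹ * (y ⬝ᵥ fun r => A r i) ^ 2 else 0)
      - (1 / 2) * (∑ i, if S i = 1 then Real.log (d i) else 0)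
      + ∑ i, (b i - (1 / 4) * v i) * S i
      = (∑ i, c i) / 2 + ∑ i, q i * S i := by
    rw [lhs_eq, rhs_eq]
    exact Finset.sum_congr rfl fun i _ => main i
  linarith [key]
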